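/- The product space ℕ^{ω₁} (the product of uncountably many copies of the countable discrete space ℕ) is not a normal topological space. -/

import Mathlib

open Topology Set

namespace Stone13Aux

variable {ι : Type*}

/-- Stone's closed set `A m`: functions taking each value other than `m` at most once. -/
def A (ι : Type*) (m : ℕ) : Set (ι → ℕ) :=
  {f | ∀ n, n ≠ m → ∀ s t, f s = n → f t = n → s = t}

theorem basicNhd {U : Set (ι → ℕ)} (hU : IsOpen U) {f : ι → ℕ} (hf : f ∈ U) :
    ∃ E : Finset ι, {g : ι → ℕ | ∀ i ∈ E, g i = f i} ⊆ U := by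
  obtain ⟨I, u, h1, h2⟩ := isOpen_pi_iff.mp hU f hf
  refine ⟨I, fun g hg => h2 fun i hi => ?_⟩
  rw [hg i hi]
  exact (h1 i hi).2

theorem isClosed_A (m : ℕ) : IsClosed (A ι m) := by
  rw [← isOpen_compl_iff]
  have : (A ι m)ᶜ = ⋃ (n : ℕ) (s : ι) (t : ι),
      {f : ι → ℕ | n ≠ m ∧ s ≠ t ∧ f s = n ∧ f t = n} := by
    ext f
    simp only [A, mem_compl_iff, mem_setOf_eq, mem_iUnion]
    push_neg
    constructor
    · rintro ⟨n, hn, s, t, hs, ht, hst⟩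
      exact ⟨n, s, t, hn, hst, hs, ht⟩
    · rintro ⟨n, s, t, hn, hst, hs, ht⟩
      exact ⟨n, hn, s, t, hs, ht, hst⟩
  rw [this]
  refine isOpen_iUnion fun n => isOpen_iUnion fun s => isOpen_iUnion fun t => ?_
  by_cases hnm : n ≠ m
  · by_cases hst : s ≠ t
    · have : {f : ι → ℕ | n ≠ m ∧ s ≠ t ∧ f s = n ∧ f t = n}
          = (fun f : ι → ℕ => f s) ⁻¹' {n} ∩ (fun f : ι → ℕ => f t) ⁻¹' {n} := by
        ext f; simp [hnm, hst, and_comm]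
      rw [this]
      exact ((isOpen_discrete {n}).preimage (continuous_apply s)).inter
        ((isOpen_discrete {n}).preimage (continuous_apply t))
    · convert isOpen_empty
      ext f; simp [hst]
  · convert isOpen_empty
    ext f; simp [hnm]

theorem disjoint_A [Uncountable ι] : Disjoint (A ι 0) (A ι 1) := by
  rw [Set.disjoint_left]
  intro f h0 h1
  have hinj : Function.Injective f := by
    intro s t hst
    rcases eq_or_ne (f s) 0 with h | h
    · exact h1 (f s) (by rw [h]; norm_num) s t rfl hst.symm
    · exact h0 (f s) h s t rfl hst.symm
  exact not_countable (hinj.countable)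

/-- The state of Engelking's inductive construction. -/
structure St (ι : Type*) where
  F : Finset ι
  x : ι → ℕ
  hx0 : ∀ i ∉ F, x i = 0
  hxpos : ∀ i ∈ F, x i ≠ 0
  hinj : Set.InjOn x F

theorem St.memA (s : St ι) : s.x ∈ A ι 0 := by
  intro n hn a b ha hb
  have haF : a ∈ s.F := by by_contra h; exact hn (ha ▸ s.hx0 a h)
  have hbF : b ∈ s.F := by by_contra h; exact hn (hb ▸ s.hx0 b h)
  exact s.hinj haF hbF (ha.trans hb.symm)

theorem step {U : Set (ι → ℕ)} (hU : IsOpen U) (hAU : A ι 0 ⊆ U) (s : St ι) :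
    ∃ s' : St ι, s.F ⊆ s'.F ∧ (∀ i ∈ s.F, s'.x i = s.x i) ∧
      {g : ι → ℕ | ∀ i ∈ s'.F, g i = s.x i} ⊆ U := by
  classical
  obtain ⟨E, hE⟩ := basicNhd hU (hAU s.memA)
  set F' : Finset ι := s.F ∪ E with hF'
  set D : Finset ι := F' \ s.F with hD
  set N : ℕ := s.F.sup s.x + 1 with hN
  set x' : ι → ℕ := fun i =>
    if i ∈ s.F then s.x i else if h : i ∈ D then N + (D.equivFin ⟨i, h⟩ : ℕ) else 0 with hx'
  have hxval : ∀ i ∈ s.F, x' i = s.x i := fun i hi => by simp [hx', hi]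
  have hxnew : ∀ i (hi : i ∈ D), x' i = N + (D.equivFin ⟨i, hi⟩ : ℕ) := by
    intro i hi
    have : i ∉ s.F := (Finset.mem_sdiff.mp hi).2
    simp [hx', this, hi]
  have hxle : ∀ i ∈ s.F, s.x i < N := fun i hi =>
    Nat.lt_succ_of_le (Finset.le_sup hi)
  refine ⟨⟨F', x', ?_, ?_, ?_⟩, Finset.subset_union_left, hxval, ?_⟩
  · intro i hi
    have h1 : i ∉ s.F := fun h => hi (Finset.subset_union_left h)
    have h2 : i ∉ D := fun h => hi (Finset.mem_sdiff.mp h).1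
    simp [hx', h1, h2]
  · intro i hi
    by_cases h : i ∈ s.F
    · rw [hxval i h]; exact s.hxpos i h
    · have hiD : i ∈ D := Finset.mem_sdiff.mpr ⟨hi, h⟩
      rw [hxnew i hiD]
      positivity
  · intro a haF' b hbF' hab
    by_cases ha : a ∈ s.F <;> by_cases hb : b ∈ s.F
    · exact s.hinj ha hb (by rwa [hxval a ha, hxval b hb] at hab)
    · have hbD : b ∈ D := Finset.mem_sdiff.mpr ⟨hbF', hb⟩
      rw [hxval a ha, hxnew b hbD] at hab
      exact absurd hab (by have := hxle a ha; omega)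
    · have haD : a ∈ D := Finset.mem_sdiff.mpr ⟨haF', ha⟩
      rw [hxnew a haD, hxval b hb] at hab
      exact absurd hab (by have := hxle b hb; omega)
    · have haD : a ∈ D := Finset.mem_sdiff.mpr ⟨haF', ha⟩
      have hbD : b ∈ D := Finset.mem_sdiff.mpr ⟨hbF', hb⟩
      rw [hxnew a haD, hxnew b hbD] at hab
      have : (D.equivFin ⟨a, haD⟩ : ℕ) = (D.equivFin ⟨b, hbD⟩ : ℕ) := by omega
      have := D.equivFin.injective (Fin.ext this)
      exact Subtype.ext_iff.mp this
  · intro g hg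
    refine hE fun i hi => hg i ?_
    exact Finset.subset_union_right hi

theorem not_normal (ι : Type*) [Uncountable ι] : ¬ NormalSpace (ι → ℕ) := by
  classical
  intro hN
  obtain ⟨U, V, hU, hV, hAU, hAV, hUV⟩ :=
    hN.normal (A ι 0) (A ι 1) (isClosed_A 0) (isClosed_A 1) disjoint_A
  -- build the sequence of states
  choose stp hsub hext hnbhd using step hU hAU
  set seq : ℕ → St ι := fun k => Nat.rec ⟨∅, fun _ => 0, fun _ _ => rfl,
      fun i hi => absurd hi (Finset.notMem_empty i),
      by intro a ha b hb hab; simp at ha⟩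
    (fun _ s => stp s) k with hseq
  have hseqsucc : ∀ k, seq (k + 1) = stp (seq k) := fun k => rfl
  set F : ℕ → Finset ι := fun k => (seq k).F with hF
  set x : ℕ → ι → ℕ := fun k => (seq k).x with hx
  have hFmono : ∀ k m, k ≤ m → F k ⊆ F m := by
    intro k m
    induction m with
    | zero => intro hkm; rw [Nat.le_zero.mp hkm]
    | succ m ih =>
      intro hkm
      rcases Nat.lt_or_ge k (m + 1) with h | h
      · exact (ih (by omega)).trans (hsub (seq m))
      · rw [(by omega : k = m + 1)]
  have hxext : ∀ k m, k ≤ m → ∀ i ∈ F k, x m i = x k i := by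
    intro k m
    induction m with
    | zero =>
      intro hkm
      rw [Nat.le_zero.mp hkm]
      intro i _; rfl
    | succ m ih =>
      intro hkm
      rcases Nat.lt_or_ge k (m + 1) with h | h
      · intro i hi
        have h1 : x (m + 1) i = x m i := hext (seq m) i (hFmono k m (by omega) hi)
        rw [h1, ih (by omega) i hi]
      · rw [(by omega : k = m + 1)]
        intro i _; rfl
  -- the limit point y
  set y : ι → ℕ := fun i => if h : ∃ k, i ∈ F k then x h.choose i else 1 with hy
  have hyF : ∀ k, ∀ i ∈ F k, y i = x k i := by
    intro k i hi
    have h : ∃ k, i ∈ F k := ⟨k, hi⟩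
    have hc := h.choose_spec
    simp only [hy, dif_pos h]
    rcases Nat.le_total h.choose k with hle | hle
    · rw [← hxext h.choose k hle i hc]
    · rw [hxext k h.choose hle i hi]
  have hyout : ∀ i, (¬ ∃ k, i ∈ F k) → y i = 1 := by
    intro i h; simp only [hy, dif_neg h]
  -- y ∈ A ι 1
  have hyA : y ∈ A ι 1 := by
    intro n hn a b ha hb
    have haF : ∃ k, a ∈ F k := by
      by_contra h; rw [hyout a h] at ha; exact hn ha.symm
    have hbF : ∃ k, b ∈ F k := by
      by_contra h; rw [hyout b h] at hb; exact hn hb.symm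
    obtain ⟨k, hk⟩ := haF
    obtain ⟨m, hm⟩ := hbF
    have hkK : a ∈ F (max k m) := hFmono k _ (le_max_left k m) hk
    have hmK : b ∈ F (max k m) := hFmono m _ (le_max_right k m) hm
    refine (seq (max k m)).hinj hkK hmK ?_
    show x (max k m) a = x (max k m) b
    rw [← hyF _ a hkK, ← hyF _ b hmK, ha, hb]
  -- a basic neighbourhood of y inside V
  obtain ⟨E, hE⟩ := basicNhd hV (hAV hyA)
  -- choose k large enough
  set K : ℕ := E.sup (fun i => if h : ∃ k, i ∈ F k then h.choose else 0) with hK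
  have hEF : ∀ i ∈ E, (∃ k, i ∈ F k) → i ∈ F K := by
    intro i hi h
    refine hFmono h.choose K ?_ h.choose_spec
    calc h.choose = (if h' : ∃ k, i ∈ F k then h'.choose else 0) := by rw [dif_pos h]
    _ ≤ K := Finset.le_sup (f := fun i => if h' : ∃ k, i ∈ F k then h'.choose else 0) hi
  -- the contradiction point z
  set z : ι → ℕ := fun i => if i ∈ F (K + 1) then x K i else y i with hz
  have hzU : z ∈ U := by
    have := hnbhd (seq K)
    refine this ?_
    intro i hi
    have : i ∈ F (K + 1) := hi
    simp [hz, this]; rfl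
  have hzV : z ∈ V := by
    refine hE fun i hi => ?_
    by_cases h : i ∈ F (K + 1)
    · have hiK : i ∈ F K := hEF i hi ⟨K + 1, h⟩
      simp only [hz, if_pos h]
      exact (hyF K i hiK).symm
    · simp [hz, h]
  exact Set.disjoint_left.mp hUV hzU hzV

end Stone13Aux

/-- A. H. Stone: The product `ℕ^{ω₁}` of uncountably many (here: `ω₁` many)
copies of the countable discrete space `ℕ` is not normal. -/
theorem statement13 : ¬ NormalSpace ((Cardinal.aleph 1).out → ℕ) := by
  have : Uncountable ((Cardinal.aleph 1).out) := by
    rw [← Cardinal.aleph0_lt_mk_iff, Cardinal.mk_out]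
    exact Cardinal.aleph0_lt_aleph_one
  exact Stone13Aux.not_normal _
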